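/- Proposition 4 (Blasiak–Kleinberg–Lubetzky, undirected approximation): There exists a positive integer N such that for every n ≥ N and every undirected side information graph G on n vertices, χ(Ḡ) ≤ 4·(n / log₂ n) · β(G); that is, for all sufficiently large n the clique covering scheme approximates the broadcast rate of every n-vertex undirected index coding problem within a multiplicative factor of 4n / log₂ n. -/

import Mathlib

/-- A `(t, r)` index code for the side-information relation `E` on vertex type `V`:
an edge `i → j` (i.e., `E i j`) means that receiver `j` has message `i` as side
information.  Messages are `t`-bit strings `Fin t → Bool`, the broadcast index is an
`r`-bit string `Fin r → Bool`, and every receiver `j` can recover its message `x j`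
from the index and its side information. -/
structure IndexCode {V : Type*} (E : V → V → Prop) (t r : ℕ) where
  enc : (V → (Fin t → Bool)) → (Fin r → Bool)
  dec : ∀ j : V, (Fin r → Bool) → (({i : V // E i j}) → (Fin t → Bool)) → (Fin t → Bool)
  correct : ∀ (x : V → (Fin t → Bool)) (j : V),
    dec j (enc x) (fun i => x i.1) = x j

/-- The broadcast rate `β = inf { r / t : a (t, r) index code exists }`. -/
noncomputable def broadcastRate {V : Type*} (E : V → V → Prop) : ℝ :=
  sInf { q : ℝ | ∃ t r : ℕ, 0 < t ∧ Nonempty (IndexCode E t r) ∧ q = (r : ℝ) / t }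

/-- The trivial `(1, n)` index code broadcasting every message. -/
def trivialCode {n : ℕ} (E : Fin n → Fin n → Prop) : IndexCode E 1 n where
  enc x := fun i => x i 0
  dec j b _ := fun _ => b j
  correct x j := by
    funext kk
    have hk : kk = 0 := Subsingleton.elim kk 0
    subst hk
    rfl

open Finset in
/-- Ramsey-type bound: a set of at least `2 ^ (s + k)` vertices contains an
independent set of size `s` (a clique of the complement) or a clique of size `k`. -/
lemma my_ramsey {V : Type*} [DecidableEq V] (G : SimpleGraph V) [DecidableRel G.Adj] :
    ∀ (m s k : ℕ), s + k ≤ m → ∀ A : Finset V, 2 ^ (s + k) ≤ A.card →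
      (∃ S : Finset V, S ⊆ A ∧ S.card = s ∧ Gᶜ.IsClique ↑S) ∨
      (∃ C : Finset V, C ⊆ A ∧ C.card = k ∧ G.IsClique ↑C) := by
  intro m
  induction m with
  | zero =>
    intro s k hsk A _
    have hs : s = 0 := by omega
    subst hs
    exact Or.inl ⟨∅, empty_subset _, card_empty, by simp⟩
  | succ m ih =>
    intro s k hsk A hA
    match s, k with
    | 0, k => exact Or.inl ⟨∅, empty_subset _, card_empty, by simp⟩
    | a+1, 0 => exact Or.inr ⟨∅, empty_subset _, card_empty, by simp⟩
    | a+1, b+1 =>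
      have hApos : 0 < A.card := lt_of_lt_of_le (pow_pos (by norm_num) _) hA
      obtain ⟨v, hv⟩ := card_pos.mp hApos
      set B := A.erase v with hBdef
      set Nb := B.filter (fun u => G.Adj v u) with hNb
      set Nn := B.filter (fun u => ¬ G.Adj v u) with hNn
      have hsplit : Nb.card + Nn.card = B.card :=
        card_filter_add_card_filter_not (fun u => G.Adj v u)
      have hBcard : B.card = A.card - 1 := card_erase_of_mem hv
      have hpow : 2 ^ ((a+1) + (b+1)) = 2 ^ ((a+1) + b) + 2 ^ (a + (b+1)) := by
        have e1 : (a+1)+(b+1) = ((a+1)+b)+1 := by omega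
        have e2 : (a+1)+b = a+(b+1) := by omega
        rw [e1, pow_succ, e2]; ring
      have hposb : 0 < 2 ^ ((a+1) + b) := pow_pos (by norm_num) _
      have hposn : 0 < 2 ^ (a + (b+1)) := pow_pos (by norm_num) _
      have key : 2 ^ ((a+1) + b) ≤ Nb.card ∨ 2 ^ (a + (b+1)) ≤ Nn.card := by
        by_contra hcon
        push_neg at hcon
        omega
      have hNbA : Nb ⊆ A := (filter_subset _ _).trans (erase_subset _ _)
      have hNnA : Nn ⊆ A := (filter_subset _ _).trans (erase_subset _ _)
      rcases key with hcase | hcase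
      · rcases ih (a+1) b (by omega) Nb hcase with ⟨S, hSsub, hScard, hSclq⟩ | ⟨C, hCsub, hCcard, hCclq⟩
        · exact Or.inl ⟨S, hSsub.trans hNbA, hScard, hSclq⟩
        · refine Or.inr ⟨insert v C, ?_, ?_, ?_⟩
          · exact insert_subset hv (hCsub.trans hNbA)
          · have hvC : v ∉ C := fun h => (notMem_erase v A) ((filter_subset _ _) (hCsub h))
            rw [card_insert_of_notMem hvC, hCcard]
          · rw [coe_insert]
            refine hCclq.insert ?_
            intro u hu _
            exact (mem_filter.mp (hCsub hu)).2
      · rcases ih a (b+1) (by omega) Nn hcase with ⟨S, hSsub, hScard, hSclq⟩ | ⟨C, hCsub, hCcard, hCclq⟩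
        · refine Or.inl ⟨insert v S, ?_, ?_, ?_⟩
          · exact insert_subset hv (hSsub.trans hNnA)
          · have hvS : v ∉ S := fun h => (notMem_erase v A) ((filter_subset _ _) (hSsub h))
            rw [card_insert_of_notMem hvS, hScard]
          · rw [coe_insert]
            refine hSclq.insert ?_
            intro u hu hne
            rw [SimpleGraph.compl_adj]
            exact ⟨hne, (mem_filter.mp (hSsub hu)).2⟩
        · exact Or.inr ⟨C, hCsub.trans hNnA, hCcard, hCclq⟩

open Finset in
/-- A cover of the vertices by cliques of `G` yields a proper coloring of `Gᶜ`. -/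
lemma cover_colorable {V : Type*} (G : SimpleGraph V) (l : List (Finset V))
    (hc : ∀ C ∈ l, G.IsClique ↑C) (hcov : ∀ v : V, ∃ C ∈ l, v ∈ C) :
    Gᶜ.Colorable l.length := by
  classical
  have hex : ∀ v : V, ∃ i : Fin l.length, v ∈ l.get i := by
    intro v
    obtain ⟨C, hC, hvC⟩ := hcov v
    obtain ⟨i, hi⟩ := List.mem_iff_get.mp hC
    exact ⟨i, hi ▸ hvC⟩
  refine ⟨SimpleGraph.Coloring.mk (fun v => Classical.choose (hex v)) ?_⟩
  intro u w hadj heq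
  have hu := Classical.choose_spec (hex u)
  have hw := Classical.choose_spec (hex w)
  change Classical.choose (hex u) = Classical.choose (hex w) at heq
  rw [heq] at hu
  rw [SimpleGraph.compl_adj] at hadj
  have hmem : l.get (Classical.choose (hex w)) ∈ l :=
    l.get_mem (Classical.choose (hex w))
  exact hadj.2 ((hc _ hmem) (Finset.mem_coe.mpr hu) (Finset.mem_coe.mpr hw) hadj.1)

open Finset in
/-- Greedy peeling: if every `M`-element vertex subset contains a `k`-clique, every
finite vertex set can be covered by at most `card / k + M` cliques. -/
lemma peel {V : Type*} [DecidableEq V] (G : SimpleGraph V) (k M : ℕ) (hk : 0 < k)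
    (hR : ∀ A : Finset V, M ≤ A.card → ∃ C : Finset V, C ⊆ A ∧ C.card = k ∧ G.IsClique ↑C) :
    ∀ A : Finset V, ∃ l : List (Finset V), (∀ C ∈ l, G.IsClique ↑C) ∧
      (∀ v ∈ A, ∃ C ∈ l, v ∈ C) ∧ l.length ≤ A.card / k + M := by
  intro A
  induction A using Finset.strongInduction with
  | _ A ih =>
  by_cases hM : A.card < M
  · refine ⟨A.toList.map (fun v => {v}), ?_, ?_, ?_⟩
    · intro C hC
      obtain ⟨v, _, rfl⟩ := List.mem_map.mp hC
      simpa using G.isClique_singleton v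
    · intro v hv
      exact ⟨{v}, List.mem_map.mpr ⟨v, mem_toList.mpr hv, rfl⟩, mem_singleton_self v⟩
    · rw [List.length_map, Finset.length_toList]
      exact (Nat.le_of_lt hM).trans (Nat.le_add_left _ _)
  · push_neg at hM
    obtain ⟨C, hCA, hCk, hCc⟩ := hR A hM
    have hCne : C.Nonempty := card_pos.mp (by omega)
    obtain ⟨l, h1, h2, h3⟩ := ih (A \ C) (Finset.sdiff_ssubset hCA hCne)
    refine ⟨C :: l, ?_, ?_, ?_⟩
    · intro D hD
      rcases List.mem_cons.mp hD with rfl | h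
      · exact hCc
      · exact h1 _ h
    · intro v hv
      by_cases hvC : v ∈ C
      · exact ⟨C, List.mem_cons_self, hvC⟩
      · obtain ⟨D, hD, hvD⟩ := h2 v (Finset.mem_sdiff.mpr ⟨hv, hvC⟩)
        exact ⟨D, List.mem_cons_of_mem _ hD, hvD⟩
    · rw [List.length_cons]
      have hcard : (A \ C).card = A.card - k := by rw [card_sdiff_of_subset hCA, hCk]
      have hkA : k ≤ A.card := hCk ▸ card_le_card hCA
      have hdiv : (A.card - k) / k + 1 = A.card / k := by
        rw [← Nat.add_div_right _ hk, Nat.sub_add_cancel hkA]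
      rw [hcard] at h3
      omega

/-- An independent set (clique of the complement) forces `t * |S| ≤ r` for any code. -/
lemma rate_lb {n : ℕ} (G : SimpleGraph (Fin n)) (S : Finset (Fin n))
    (hS : Gᶜ.IsClique ↑S) {t r : ℕ} (code : IndexCode G.Adj t r) :
    t * S.card ≤ r := by
  classical
  set ext : (∀ _ : {x // x ∈ S}, Fin t → Bool) → (Fin n → (Fin t → Bool)) :=
    fun y v => if h : v ∈ S then y ⟨v, h⟩ else fun _ => false with hext
  have hinj : Function.Injective (fun y => code.enc (ext y)) := by
    intro y y' h
    simp only at h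
    have key : ∀ j : Fin n, j ∈ S → ext y j = ext y' j := by
      intro j hj
      have hside : (fun i : {i // G.Adj i j} => ext y i.1) =
          (fun i : {i // G.Adj i j} => ext y' i.1) := by
        funext i
        have hiS : i.1 ∉ S := by
          intro hiS
          have hne : i.1 ≠ j := G.ne_of_adj i.2
          have hcadj := hS (Finset.mem_coe.mpr hiS) (Finset.mem_coe.mpr hj) hne
          rw [SimpleGraph.compl_adj] at hcadj
          exact hcadj.2 i.2
        simp [hext, hiS]
      calc ext y j = code.dec j (code.enc (ext y)) (fun i => ext y i.1) :=
            (code.correct _ j).symm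
        _ = code.dec j (code.enc (ext y')) (fun i => ext y' i.1) := by rw [h, hside]
        _ = ext y' j := code.correct _ j
    funext j
    have hkey := key j.1 j.2
    simpa [hext, j.2] using hkey
  have hcard := Fintype.card_le_of_injective _ hinj
  simp only [Fintype.card_fun, Fintype.card_bool, Fintype.card_fin, Fintype.card_coe] at hcard
  rw [← pow_mul] at hcard
  exact (Nat.pow_le_pow_iff_right (by norm_num)).mp hcard

/-- The broadcast rate is at least the size of any independent set. -/
lemma broadcastRate_lb {n : ℕ} (G : SimpleGraph (Fin n)) (S : Finset (Fin n))
    (hS : Gᶜ.IsClique ↑S) : (S.card : ℝ) ≤ broadcastRate G.Adj := by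
  apply le_csInf
  · exact ⟨(n : ℝ), 1, n, one_pos, ⟨trivialCode G.Adj⟩, by norm_num⟩
  · rintro q ⟨t, r, ht, ⟨code⟩, rfl⟩
    rw [le_div_iff₀ (by exact_mod_cast ht)]
    have hle := rate_lb G S hS code
    calc (S.card : ℝ) * t = ((t * S.card : ℕ) : ℝ) := by push_cast; ring
      _ ≤ (r : ℝ) := Nat.cast_le.mpr hle

/-- **Proposition 4 (Blasiak–Kleinberg–Lubetzky).**  There is a positive integer `N`
such that for every `n ≥ N` and every undirected side information graph `G` on `n`
vertices, `χ(Ḡ) ≤ 4 * (n / log₂ n) * β(G)`: the clique covering scheme approximates the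
broadcast rate within a factor of `4n / log₂ n` for all sufficiently large `n`. -/
theorem bkl_undirected_approx :
    ∃ N : ℕ, 0 < N ∧ ∀ n : ℕ, N ≤ n → ∀ G : SimpleGraph (Fin n),
      ((Gᶜ.chromaticNumber.toNat : ℝ)) ≤
        4 * ((n : ℝ) / Real.logb 2 (n : ℝ)) * broadcastRate G.Adj := by
  classical
  refine ⟨884736, by norm_num, ?_⟩
  intro n hn G
  have hn2 : 2 ≤ n := le_trans (by norm_num) hn
  have hnR : (884736 : ℝ) ≤ (n : ℝ) := by exact_mod_cast hn
  have hn0 : (0 : ℝ) < (n : ℝ) := by linarith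
  set L := Real.logb 2 (n : ℝ) with hLdef
  have hL1 : 1 ≤ L := by
    rw [hLdef]
    calc (1 : ℝ) = Real.logb 2 2 := (Real.logb_self_eq_one (by norm_num)).symm
      _ ≤ Real.logb 2 (n : ℝ) := by
          rw [Real.logb_le_logb (by norm_num) (by norm_num) hn0]
          linarith
  have hL0 : (0 : ℝ) < L := lt_of_lt_of_le one_pos hL1
  set s := ⌈L / 4⌉₊ with hsdef
  set k := ⌈L / 3⌉₊ with hkdef
  have hk1 : 1 ≤ k := Nat.ceil_pos.mpr (by positivity)
  have hkl : L / 3 ≤ (k : ℝ) := Nat.le_ceil _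
  have hsl : L / 4 ≤ (s : ℝ) := Nat.le_ceil _
  have hsu : (s : ℝ) ≤ L / 4 + 1 := (Nat.ceil_lt_add_one (by positivity)).le
  have hku : (k : ℝ) ≤ L / 3 + 1 := (Nat.ceil_lt_add_one (by positivity)).le
  have hβ1 : (1 : ℝ) ≤ broadcastRate G.Adj := by
    have hone := broadcastRate_lb G {⟨0, by omega⟩} (by simp)
    simpa using hone
  by_cases hα : ∃ S : Finset (Fin n), S.card = s ∧ Gᶜ.IsClique ↑S
  · obtain ⟨S, hcardS, hclq⟩ := hα
    have hβ : (s : ℝ) ≤ broadcastRate G.Adj := by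
      have := broadcastRate_lb G S hclq
      rwa [hcardS] at this
    have hχ : ((Gᶜ.chromaticNumber.toNat : ℕ) : ℝ) ≤ (n : ℝ) := by
      have h1 : Gᶜ.chromaticNumber ≤ ((Fintype.card (Fin n) : ℕ) : ℕ∞) :=
        (Gᶜ.colorable_of_fintype).chromaticNumber_le
      have h2 := ENat.toNat_le_of_le_coe h1
      rw [Fintype.card_fin] at h2
      exact_mod_cast h2
    calc ((Gᶜ.chromaticNumber.toNat : ℕ) : ℝ) ≤ (n : ℝ) := hχ
      _ = 4 * ((n : ℝ) / L) * (L / 4) := by field_simp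
      _ ≤ 4 * ((n : ℝ) / L) * broadcastRate G.Adj := by
          apply mul_le_mul_of_nonneg_left (le_trans hsl hβ) (by positivity)
  · push_neg at hα
    set M := 2 ^ (s + k) with hMdef
    have hram : ∀ A : Finset (Fin n), M ≤ A.card →
        ∃ C : Finset (Fin n), C ⊆ A ∧ C.card = k ∧ G.IsClique ↑C := by
      intro A hA
      rcases my_ramsey G (s + k) s k le_rfl A hA with ⟨S, _, hcs, hcl⟩ | h
      · exact absurd hcl (hα S hcs)
      · exact h
    obtain ⟨l, hcl, hcov, hlen⟩ := peel G k M (by omega) hram Finset.univ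
    have hcol : Gᶜ.Colorable l.length :=
      cover_colorable G l hcl (fun v => hcov v (Finset.mem_univ v))
    have hχ : Gᶜ.chromaticNumber.toNat ≤ n / k + M := by
      refine le_trans (ENat.toNat_le_of_le_coe hcol.chromaticNumber_le) ?_
      simpa [Finset.card_univ] using hlen
    -- analytic estimate : M ≤ n / L
    have h2L : (2 : ℝ) ^ L = (n : ℝ) := Real.rpow_logb (by norm_num) (by norm_num) hn0
    have hMcast : (M : ℝ) = (2 : ℝ) ^ (((s + k : ℕ) : ℝ)) := by
      rw [hMdef, Real.rpow_natCast]; push_cast; ring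
    have hexp : (((s + k : ℕ) : ℝ)) ≤ 7 / 12 * L + 2 := by push_cast; linarith
    have step1 : (M : ℝ) ≤ (2 : ℝ) ^ (7 / 12 * L + 2) := by
      rw [hMcast]
      exact Real.rpow_le_rpow_of_exponent_le (by norm_num) hexp
    have step2 : (2 : ℝ) ^ (7 / 12 * L + 2) = 4 * ((n : ℝ) ^ ((7 : ℝ) / 12)) := by
      rw [Real.rpow_add (by norm_num), show (7 / 12 * L) = L * (7 / 12) by ring,
        Real.rpow_mul (by norm_num), h2L]
      norm_num
      ring
    have hlogn0 : 0 ≤ Real.log (n : ℝ) := Real.log_nonneg (by linarith)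
    have hlogn : Real.log (n : ℝ) ≤ 12 * (n : ℝ) ^ ((1 : ℝ) / 12) := by
      have h1 : Real.log ((n : ℝ) ^ ((1 : ℝ) / 12)) = (1 / 12) * Real.log (n : ℝ) :=
        Real.log_rpow hn0 _
      have h2 : Real.log ((n : ℝ) ^ ((1 : ℝ) / 12)) ≤ (n : ℝ) ^ ((1 : ℝ) / 12) :=
        Real.log_le_self (by positivity)
      rw [h1] at h2
      linarith
    have hLlog : L ≤ 2 * Real.log (n : ℝ) := by
      have hlog2 : (1 / 2 : ℝ) < Real.log 2 := by
        have := Real.log_two_gt_d9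
        linarith
      rw [hLdef, Real.logb, div_le_iff₀ (by linarith)]
      nlinarith
    have hcube : (96 : ℝ) ≤ (n : ℝ) ^ ((1 : ℝ) / 3) := by
      have h1 : ((96 : ℝ) ^ (3 : ℕ)) ≤ (n : ℝ) := by norm_num; linarith
      calc (96 : ℝ) = ((96 : ℝ) ^ (3 : ℕ)) ^ ((1 : ℝ) / 3) := by
            rw [← Real.rpow_natCast (96 : ℝ) 3, ← Real.rpow_mul (by norm_num)]
            norm_num
        _ ≤ (n : ℝ) ^ ((1 : ℝ) / 3) := Real.rpow_le_rpow (by positivity) h1 (by norm_num)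
    have h112 : (0 : ℝ) ≤ (n : ℝ) ^ ((1 : ℝ) / 12) := by positivity
    have h4L : 4 * L ≤ (n : ℝ) ^ ((5 : ℝ) / 12) := by
      have e1 : (n : ℝ) ^ ((5 : ℝ) / 12) = (n : ℝ) ^ ((1 : ℝ) / 12) * (n : ℝ) ^ ((1 : ℝ) / 3) := by
        rw [← Real.rpow_add hn0]; norm_num
      calc 4 * L ≤ 8 * Real.log (n : ℝ) := by linarith
        _ ≤ 96 * (n : ℝ) ^ ((1 : ℝ) / 12) := by linarith
        _ ≤ (n : ℝ) ^ ((1 : ℝ) / 12) * (n : ℝ) ^ ((1 : ℝ) / 3) := by nlinarith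
        _ = (n : ℝ) ^ ((5 : ℝ) / 12) := e1.symm
    have hfin : 4 * ((n : ℝ) ^ ((7 : ℝ) / 12)) * L ≤ (n : ℝ) := by
      have e1 : (n : ℝ) = (n : ℝ) ^ ((7 : ℝ) / 12) * (n : ℝ) ^ ((5 : ℝ) / 12) := by
        rw [← Real.rpow_add hn0]
        norm_num
      have h7 : (0 : ℝ) ≤ (n : ℝ) ^ ((7 : ℝ) / 12) := by positivity
      calc 4 * ((n : ℝ) ^ ((7 : ℝ) / 12)) * L = (n : ℝ) ^ ((7 : ℝ) / 12) * (4 * L) := by ring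
        _ ≤ (n : ℝ) ^ ((7 : ℝ) / 12) * (n : ℝ) ^ ((5 : ℝ) / 12) :=
            mul_le_mul_of_nonneg_left h4L h7
        _ = (n : ℝ) := e1.symm
    have hMr : (M : ℝ) ≤ (n : ℝ) / L := by
      rw [le_div_iff₀ hL0]
      calc (M : ℝ) * L ≤ 4 * ((n : ℝ) ^ ((7 : ℝ) / 12)) * L :=
            mul_le_mul_of_nonneg_right (step1.trans step2.le) hL0.le
        _ ≤ (n : ℝ) := hfin
    have hdiv : ((n / k : ℕ) : ℝ) ≤ 3 * ((n : ℝ) / L) := by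
      have hk0R : (0 : ℝ) < L / 3 := by positivity
      calc ((n / k : ℕ) : ℝ) ≤ (n : ℝ) / (k : ℝ) := Nat.cast_div_le
        _ ≤ (n : ℝ) / (L / 3) := div_le_div_of_nonneg_left hn0.le hk0R hkl
        _ = 3 * ((n : ℝ) / L) := by field_simp
    calc ((Gᶜ.chromaticNumber.toNat : ℕ) : ℝ) ≤ ((n / k + M : ℕ) : ℝ) := Nat.cast_le.mpr hχ
      _ = ((n / k : ℕ) : ℝ) + (M : ℝ) := by push_cast; ring
      _ ≤ 3 * ((n : ℝ) / L) + (n : ℝ) / L := by linarith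
      _ = 4 * ((n : ℝ) / L) * 1 := by ring
      _ ≤ 4 * ((n : ℝ) / L) * broadcastRate G.Adj := by
          apply mul_le_mul_of_nonneg_left hβ1 (by positivity)
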